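/- Let h : ℕ → ℕ satisfy condition (a). If y, z ∈ ℕ satisfy h(z) ≥ y, then for every integer i ≥ 1 we have h(2^i · ⌊z/2^i⌋) ≥ 2^(i-1) · ⌊y/2^(i-1)⌋ (equivalently, if h(Σ_{k=0}^n z_k 2^k) ≥ Σ_{k=0}^n y_k 2^k for binary digits z_k, y_k, then h(Σ_{k=i}^n z_k 2^k) ≥ Σ_{k=i-1}^n y_k 2^k). -/

import Mathlib

/-- Condition (a): if `⌊z/2^i⌋ = ⌊z'/2^i⌋` for some `i ≥ 1`,
then `⌊h(z)/2^(i-1)⌋ = ⌊h(z')/2^(i-1)⌋`. -/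
def CondA (h : ℕ → ℕ) : Prop :=
  ∀ z z' i : ℕ, 1 ≤ i → z / 2 ^ i = z' / 2 ^ i →
    h z / 2 ^ (i - 1) = h z' / 2 ^ (i - 1)

theorem stmt_2 (h : ℕ → ℕ) (hA : CondA h) (y z : ℕ) (hyz : y ≤ h z)
    (i : ℕ) (hi : 1 ≤ i) :
    2 ^ (i - 1) * (y / 2 ^ (i - 1)) ≤ h (2 ^ i * (z / 2 ^ i)) := by
  have hq : (2 ^ i * (z / 2 ^ i)) / 2 ^ i = z / 2 ^ i :=
    Nat.mul_div_cancel_left _ (Nat.pow_pos (by norm_num))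
  have key := hA z (2 ^ i * (z / 2 ^ i)) i hi hq.symm
  calc 2 ^ (i - 1) * (y / 2 ^ (i - 1))
      ≤ 2 ^ (i - 1) * (h z / 2 ^ (i - 1)) :=
        Nat.mul_le_mul_left _ (Nat.div_le_div_right hyz)
    _ = 2 ^ (i - 1) * (h (2 ^ i * (z / 2 ^ i)) / 2 ^ (i - 1)) := by rw [key]
    _ ≤ h (2 ^ i * (z / 2 ^ i)) := Nat.mul_div_le _ _
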